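/- Let (Ω,μ) be a finite measure space, X a Banach space, 1 ≤ p < ∞, and let K ⊆ X be a fixed compact set. If V ⊆ L^p(μ;X) is scalarly relatively compact and every function in V takes (μ-almost all of) its values in K, then V is relatively compact in L^p(μ;X). -/

import Mathlib

set_option synthInstance.maxHeartbeats 1000000
set_option maxHeartbeats 1000000

open MeasureTheory ENNReal Filter Topology

private lemma sep_family_aux {X : Type*} [NormedAddCommGroup X] [NormedSpace ℝ X]
    {K : Set X} (hK : IsCompact K) :
    ∃ L : ℕ × ℕ → X →L[ℝ] ℝ, (∀ k, ‖L k‖ ≤ 1) ∧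
      ∀ y ∈ K, ∀ z ∈ K, ∃ k, ‖y - z‖ / 5 ≤ |L k y - L k z| := by
  classical
  obtain ⟨c, hc_count, hc_sub⟩ := hK.isSeparable
  obtain ⟨d, hd⟩ := (hc_count.insert 0).exists_eq_range (Set.insert_nonempty _ _)
  have hKd : K ⊆ closure (Set.range d) := by
    rw [← hd]; exact hc_sub.trans (closure_mono (Set.subset_insert _ _))
  refine ⟨fun k => if h : d k.1 - d k.2 ≠ 0 then (exists_dual_vector ℝ (d k.1 - d k.2) (norm_ne_zero_iff.2 h)).choose else 0, ?_, ?_⟩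
  · intro k
    by_cases h : d k.1 - d k.2 ≠ 0
    · simp only [dif_pos h]
      exact le_of_eq (exists_dual_vector ℝ (d k.1 - d k.2) (norm_ne_zero_iff.2 h)).choose_spec.1
    · simp [dif_neg h]
  · intro y hy z hz
    by_cases hyz : y = z
    · exact ⟨(0,0), by simp [hyz]⟩
    set ε := ‖y - z‖ / 5 with hε_def
    have h0 : 0 < ‖y - z‖ := norm_pos_iff.2 (sub_ne_zero.2 hyz)
    have hε : 0 < ε := by rw [hε_def]; linarith
    obtain ⟨_, ⟨i, rfl⟩, hi⟩ := Metric.mem_closure_iff.1 (hKd hy) ε hε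
    obtain ⟨_, ⟨j, rfl⟩, hj⟩ := Metric.mem_closure_iff.1 (hKd hz) ε hε
    have hi' : ‖y - d i‖ < ε := by rwa [← dist_eq_norm]
    have hj' : ‖d j - z‖ < ε := by rw [norm_sub_rev, ← dist_eq_norm]; exact hj
    have h1 : ‖y - z‖ ≤ ‖y - d i‖ + ‖d i - d j‖ + ‖d j - z‖ := by
      calc ‖y - z‖ = ‖(y - d i) + (d i - d j) + (d j - z)‖ := by congr 1; abel
        _ ≤ _ := norm_add₃_le
    have h5 : ‖y - z‖ = 5 * ε := by rw [hε_def]; ring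
    have hij : 3 * ε ≤ ‖d i - d j‖ := by linarith
    have hne : d i - d j ≠ 0 := by
      intro h; rw [h, norm_zero] at hij; linarith
    refine ⟨(i, j), ?_⟩
    simp only [dif_pos hne]
    obtain ⟨hg1, hg2⟩ := (exists_dual_vector ℝ (d i - d j) (norm_ne_zero_iff.2 hne)).choose_spec
    set g := (exists_dual_vector ℝ (d i - d j) (norm_ne_zero_iff.2 hne)).choose with hg_def
    have hb1 : |g (y - d i)| ≤ ε := by
      calc |g (y - d i)| = ‖g (y - d i)‖ := (Real.norm_eq_abs _).symm
        _ ≤ ‖g‖ * ‖y - d i‖ := g.le_opNorm _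
        _ ≤ 1 * ε := by rw [hg1]; linarith
        _ = ε := one_mul _
    have hb2 : |g (d j - z)| ≤ ε := by
      calc |g (d j - z)| = ‖g (d j - z)‖ := (Real.norm_eq_abs _).symm
        _ ≤ ‖g‖ * ‖d j - z‖ := g.le_opNorm _
        _ ≤ 1 * ε := by rw [hg1]; linarith
        _ = ε := one_mul _
    have hgij : |g (d i - d j)| = ‖d i - d j‖ := by
      have hg2' : g (d i - d j) = ‖d i - d j‖ := by simpa using hg2
      rw [hg2']; exact abs_of_nonneg (norm_nonneg _)
    have key : g (d i - d j) = g (y - z) - g (y - d i) - g (d j - z) := by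
      rw [← map_sub, ← map_sub]; congr 1; abel
    have h2 : |g (d i - d j)| ≤ |g (y - z)| + |g (y - d i)| + |g (d j - z)| := by
      rw [key]
      calc |g (y - z) - g (y - d i) - g (d j - z)|
          ≤ |g (y - z) - g (y - d i)| + |g (d j - z)| := abs_sub _ _
        _ ≤ |g (y - z)| + |g (y - d i)| + |g (d j - z)| := by
            have := abs_sub (g (y - z)) (g (y - d i)); linarith
    have h3 : g y - g z = g (y - z) := (map_sub g y z).symm
    rw [h3]
    have h4 : 3 * ε ≤ |g (d i - d j)| := by rw [hgij]; exact hij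
    linarith

private lemma sep_finite_aux {X : Type*} [NormedAddCommGroup X] [NormedSpace ℝ X]
    {K : Set X} (hK : IsCompact K) (L : ℕ × ℕ → X →L[ℝ] ℝ)
    (hsep : ∀ y ∈ K, ∀ z ∈ K, ∃ k, ‖y - z‖ / 5 ≤ |L k y - L k z|)
    {ε : ℝ} (hε : 0 < ε) :
    ∃ F : Finset (ℕ × ℕ), ∀ y ∈ K, ∀ z ∈ K, ε ≤ ‖y - z‖ →
      ∃ k ∈ F, ε / 6 < |L k y - L k z| := by
  set S : Set (X × X) := (K ×ˢ K) ∩ {q | ε ≤ ‖q.1 - q.2‖} with hS_def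
  have hS : IsCompact S := (hK.prod hK).inter_right
    (isClosed_le continuous_const ((continuous_fst.sub continuous_snd).norm))
  set U : ℕ × ℕ → Set (X × X) := fun k => {q | ε / 6 < |L k q.1 - L k q.2|} with hU_def
  have hU : ∀ k, IsOpen (U k) := fun k =>
    isOpen_lt continuous_const
      (((L k).continuous.comp continuous_fst).sub ((L k).continuous.comp continuous_snd)).abs
  have hcover : S ⊆ ⋃ k, U k := by
    rintro ⟨y, z⟩ ⟨⟨hy, hz⟩, hq⟩
    obtain ⟨k, hk⟩ := hsep y hy z hz
    refine Set.mem_iUnion.2 ⟨k, ?_⟩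
    have h1 : ε ≤ ‖y - z‖ := hq
    have h6 : ε / 6 < ε / 5 := by linarith
    have h7 : ε / 5 ≤ ‖y - z‖ / 5 := by linarith
    exact lt_of_lt_of_le h6 (le_trans h7 hk)
  obtain ⟨F, hF⟩ := hS.elim_finite_subcover U hU hcover
  refine ⟨F, fun y hy z hz hyz => ?_⟩
  have hm : (y, z) ∈ S := ⟨⟨hy, hz⟩, hyz⟩
  obtain ⟨k, hkF, hk⟩ := Set.mem_iUnion₂.1 (hF hm)
  exact ⟨k, hkF, hk⟩

/-- If `V ⊆ L^p(μ;X)` is scalarly relatively compact and every function in `V` takes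
μ-almost all of its values in a fixed compact set `K ⊆ X`, then `V` is relatively
compact in `L^p(μ;X)`. -/
theorem relatively_compact_of_scalarlyCompact_of_valued_in_compact
    {Ω : Type*} [MeasurableSpace Ω] {X : Type*} [NormedAddCommGroup X]
    [NormedSpace ℝ X] [CompleteSpace X]
    (μ : Measure Ω) [IsFiniteMeasure μ] (p : ℝ≥0∞) [hp : Fact (1 ≤ p)] (hp' : p ≠ ∞)
    (K : Set X) (hK : IsCompact K) (V : Set (Lp X p μ))
    (hKV : ∀ f ∈ V, ∀ᵐ ω ∂μ, (f : Ω → X) ω ∈ K)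
    (hscalar : ∀ L : X →L[ℝ] ℝ, IsCompact (closure ((fun f => L.compLp f) '' V))) :
    IsCompact (closure V) := by
  classical
  have hp0 : p ≠ 0 := (zero_lt_one.trans_le hp.out).ne'
  set q := p.toReal with hq_def
  have hq1 : (1:ℝ) ≤ q := by
    have := ENNReal.toReal_mono hp' hp.out
    simpa using this
  have hq0 : 0 < q := lt_of_lt_of_le zero_lt_one hq1
  set K' : Set X := insert 0 K with hK'_def
  have hK'c : IsCompact K' := hK.insert 0
  have hKV' : ∀ f ∈ V, ∀ᵐ ω ∂μ, (f : Ω → X) ω ∈ K' := fun f hf =>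
    (hKV f hf).mono fun ω h => Set.mem_insert_of_mem _ h
  obtain ⟨CB, hCB⟩ := hK'c.isBounded.exists_norm_le
  have hCB0 : 0 ≤ CB := le_trans (norm_nonneg (0:X)) (hCB 0 (Set.mem_insert _ _))
  obtain ⟨L, hL1, hLsep⟩ := sep_family_aux hK'c
  have main : ∀ u : ℕ → Lp X p μ, (∀ n, u n ∈ V) →
      ∃ φ : ℕ → ℕ, StrictMono φ ∧ CauchySeq (u ∘ φ) := by
    intro u huV
    have hCpi : IsCompact (Set.univ.pi fun k : ℕ × ℕ =>
        closure ((fun f => (L k).compLp f) '' V)) :=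
      isCompact_univ_pi fun k => hscalar (L k)
    have hmem : ∀ n, (fun k => (L k).compLp (u n)) ∈ Set.univ.pi fun k =>
        closure ((fun f => (L k).compLp f) '' V) := fun n k _ =>
      subset_closure ⟨u n, huV n, rfl⟩
    obtain ⟨y, -, φ, hφmono, hφtend⟩ := hCpi.isSeqCompact hmem
    have hcoord : ∀ k, Tendsto (fun j => (L k).compLp (u (φ j))) atTop (𝓝 (y k)) :=
      fun k => tendsto_pi_nhds.1 hφtend k
    have hmeas : ∀ k : ℕ × ℕ, TendstoInMeasure μ
        (fun j => ((L k).compLp (u (φ j)) : Ω → ℝ)) atTop (y k : Ω → ℝ) := by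
      intro k
      refine tendstoInMeasure_of_tendsto_eLpNorm hp0
        (fun j => Lp.aestronglyMeasurable _) (Lp.aestronglyMeasurable _) ?_
      exact (Lp.tendsto_Lp_iff_tendsto_eLpNorm' _ _).1 (hcoord k)
    refine ⟨φ, hφmono, Metric.cauchySeq_iff.2 fun ε₀ hε₀ => ?_⟩
    set M : ℝ := ((μ Set.univ) ^ (1/q)).toReal with hM_def
    have hM0 : 0 ≤ M := ENNReal.toReal_nonneg
    set ε : ℝ := ε₀ / (M + 2) with hε_def
    have hε : 0 < ε := div_pos hε₀ (by linarith)
    obtain ⟨F, hF⟩ := sep_finite_aux hK'c L hLsep hε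
    set cC : ℝ≥0∞ := ENNReal.ofReal (2*CB+1) ^ q with hcC_def
    have hcC0 : cC ≠ 0 := by
      refine (ENNReal.rpow_pos (ENNReal.ofReal_pos.2 (by linarith)) ofReal_ne_top).ne'
    have hcCtop : cC ≠ ∞ := ENNReal.rpow_ne_top_of_nonneg hq0.le ofReal_ne_top
    set T : ℝ≥0∞ := ENNReal.ofReal ε ^ q / (cC * 2 * (F.card+1)) with hT_def
    have hT0 : 0 < T := by
      refine ENNReal.div_pos ?_ ?_
      · exact (ENNReal.rpow_pos (ENNReal.ofReal_pos.2 hε) ofReal_ne_top).ne'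
      · exact ENNReal.mul_ne_top (ENNReal.mul_ne_top hcCtop (by simp)) (by simp)
    set A : ℕ × ℕ → ℕ → Set Ω := fun k m =>
      {ω | ε/12 ≤ dist (((L k).compLp (u (φ m)) : Ω → ℝ) ω) ((y k : Ω → ℝ) ω)} with hA_def
    have hev : ∀ᶠ j in atTop, ∀ k ∈ F, μ (A k j) < T := by
      rw [eventually_all_finset]
      intro k hk
      exact (tendstoInMeasure_iff_dist.1 (hmeas k) (ε/12) (by linarith)).eventually_lt_const hT0
    obtain ⟨N, hN⟩ := eventually_atTop.1 hev
    refine ⟨N, fun i hi j hj => ?_⟩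
    set B : ℕ × ℕ → ℕ → Set Ω := fun k m => toMeasurable μ (A k m) with hB_def
    set g := u (φ i) with hg_def
    set h := u (φ j) with hh_def
    -- pointwise a.e. bound
    have step1 : ∀ᵐ ω ∂μ, (‖(g : Ω → X) ω - (h : Ω → X) ω‖₊ : ℝ≥0∞) ^ q ≤
        ENNReal.ofReal ε ^ q + ∑ k ∈ F,
          ((B k i).indicator (fun _ => cC) ω + (B k j).indicator (fun _ => cC) ω) := by
      filter_upwards [hKV' g (huV (φ i)), hKV' h (huV (φ j)),
        (ae_ball_iff F.countable_toSet).2 (fun k _ => (L k).coeFn_compLp (u (φ i))),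
        (ae_ball_iff F.countable_toSet).2 (fun k _ => (L k).coeFn_compLp (u (φ j)))]
        with ω hgK hhK hci hcj
      by_cases hlt : ‖(g : Ω → X) ω - (h : Ω → X) ω‖ < ε
      · refine le_trans ?_ le_self_add
        rw [← enorm_eq_nnnorm, ← ofReal_norm]
        exact ENNReal.rpow_le_rpow (ENNReal.ofReal_le_ofReal hlt.le) hq0.le
      · push_neg at hlt
        obtain ⟨k, hkF, hk⟩ := hF _ hgK _ hhK hlt
        have hab : ω ∈ A k i ∨ ω ∈ A k j := by
          by_contra hcon
          push_neg at hcon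
          simp only [hA_def, Set.mem_setOf_eq, not_le] at hcon
          rw [hci k hkF] at hcon
          rw [hcj k hkF] at hcon
          have hd1 := hcon.1
          have hd2 := hcon.2
          rw [Real.dist_eq] at hd1 hd2
          have : |L k ((g : Ω → X) ω) - L k ((h : Ω → X) ω)| < ε/6 := by
            have := abs_sub_le (L k ((g : Ω → X) ω)) ((y k : Ω → ℝ) ω) (L k ((h : Ω → X) ω))
            have h2' : |(y k : Ω → ℝ) ω - L k ((h : Ω → X) ω)| < ε/12 := by
              rw [abs_sub_comm]; exact hd2
            linarith
          linarith
        have hbig : (‖(g : Ω → X) ω - (h : Ω → X) ω‖₊ : ℝ≥0∞) ^ q ≤ cC := by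
          rw [← enorm_eq_nnnorm, ← ofReal_norm, hcC_def]
          refine ENNReal.rpow_le_rpow (ENNReal.ofReal_le_ofReal ?_) hq0.le
          have := norm_sub_le ((g : Ω → X) ω) ((h : Ω → X) ω)
          have h1 := hCB _ hgK
          have h2 := hCB _ hhK
          linarith
        refine le_trans hbig (le_trans ?_ le_add_self)
        have hterm : cC ≤ (B k i).indicator (fun _ => cC) ω + (B k j).indicator (fun _ => cC) ω := by
          rcases hab with hab | hab
          · rw [Set.indicator_of_mem (subset_toMeasurable μ _ hab)]
            exact le_self_add
          · rw [Set.indicator_of_mem (subset_toMeasurable μ _ hab) (f := fun _ => cC)]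
            exact le_add_self
        refine le_trans hterm ?_
        exact Finset.single_le_sum (f := fun k => (B k i).indicator (fun _ => cC) ω
          + (B k j).indicator (fun _ => cC) ω) (fun k _ => zero_le) hkF
    -- integrate
    have meas_sum : Measurable fun ω => ∑ k ∈ F,
        ((B k i).indicator (fun _ => cC) ω + (B k j).indicator (fun _ => cC) ω) := by
      refine Finset.measurable_sum _ fun k _ => Measurable.add ?_ ?_
      · exact measurable_const.indicator (measurableSet_toMeasurable _ _)
      · exact measurable_const.indicator (measurableSet_toMeasurable _ _)
    have step2 : (∫⁻ ω, (‖(g : Ω → X) ω - (h : Ω → X) ω‖₊ : ℝ≥0∞) ^ q ∂μ) ≤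
        ENNReal.ofReal ε ^ q * μ Set.univ + ENNReal.ofReal ε ^ q := by
      refine le_trans (lintegral_mono_ae step1) ?_
      rw [lintegral_add_right _ meas_sum, lintegral_const]
      refine add_le_add le_rfl ?_
      rw [lintegral_finset_sum (f := fun k ω => (B k i).indicator (fun _ => cC) ω
        + (B k j).indicator (fun _ => cC) ω) _ (fun k _ => Measurable.add
        (measurable_const.indicator (measurableSet_toMeasurable _ _))
        (measurable_const.indicator (measurableSet_toMeasurable _ _)))]
      have hone : ∀ k ∈ F, (∫⁻ ω, ((B k i).indicator (fun _ => cC) ω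
          + (B k j).indicator (fun _ => cC) ω) ∂μ) ≤ 2 * (cC * T) := by
        intro k hk
        rw [lintegral_add_right _ (measurable_const.indicator (measurableSet_toMeasurable _ _)),
          lintegral_indicator_const (measurableSet_toMeasurable _ _),
          lintegral_indicator_const (measurableSet_toMeasurable _ _)]
        simp only [measure_toMeasurable]
        have h1 : μ (A k i) ≤ T := (hN i hi k hk).le
        have h2 : μ (A k j) ≤ T := (hN j hj k hk).le
        calc cC * μ (A k i) + cC * μ (A k j) ≤ cC * T + cC * T :=
              add_le_add (mul_le_mul_right h1 _) (mul_le_mul_right h2 _)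
          _ = 2 * (cC * T) := by ring
      refine le_trans (Finset.sum_le_sum hone) ?_
      rw [Finset.sum_const, nsmul_eq_mul]
      calc (F.card : ℝ≥0∞) * (2 * (cC * T)) = (cC * 2 * F.card) * T := by ring
        _ ≤ (cC * 2 * (F.card + 1)) * T := by
            refine mul_le_mul_left (mul_le_mul_right ?_ _) _
            exact le_self_add
        _ ≤ ENNReal.ofReal ε ^ q := ENNReal.mul_div_le
    -- conclude
    have hD : eLpNorm ((g : Ω → X) - (h : Ω → X)) p μ ≤
        ENNReal.ofReal ε * (μ Set.univ) ^ (1/q) + ENNReal.ofReal ε := by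
      rw [eLpNorm_eq_lintegral_rpow_enorm_toReal hp0 hp']
      have : (∫⁻ ω, (‖((g : Ω → X) - (h : Ω → X)) ω‖₊ : ℝ≥0∞) ^ q ∂μ) ≤
          ENNReal.ofReal ε ^ q * μ Set.univ + ENNReal.ofReal ε ^ q := by
        simpa [Pi.sub_apply] using step2
      refine le_trans (ENNReal.rpow_le_rpow this (by positivity)) ?_
      refine le_trans (ENNReal.rpow_add_le_add_rpow _ _ (by positivity) (by
        rw [div_le_one hq0]; linarith)) ?_
      have e1 : (ENNReal.ofReal ε ^ q * μ Set.univ) ^ (1/q) =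
          ENNReal.ofReal ε * (μ Set.univ) ^ (1/q) := by
        rw [ENNReal.mul_rpow_of_nonneg _ _ (by positivity), ← ENNReal.rpow_mul,
          mul_one_div_cancel hq0.ne', ENNReal.rpow_one]
      have e2 : (ENNReal.ofReal ε ^ q) ^ (1/q) = ENNReal.ofReal ε := by
        rw [← ENNReal.rpow_mul, mul_one_div_cancel hq0.ne', ENNReal.rpow_one]
      rw [e1, e2]
    have hfin : ENNReal.ofReal ε * (μ Set.univ) ^ (1/q) + ENNReal.ofReal ε ≠ ∞ := by
      refine ENNReal.add_ne_top.2 ⟨ENNReal.mul_ne_top ofReal_ne_top ?_, ofReal_ne_top⟩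
      exact ENNReal.rpow_ne_top_of_nonneg (by positivity) (measure_ne_top μ _)
    have hdist : dist ((u ∘ φ) i) ((u ∘ φ) j) ≤ ε * M + ε := by
      rw [Function.comp_apply, Function.comp_apply, Lp.dist_def, ← hg_def, ← hh_def]
      have := ENNReal.toReal_mono hfin (by
        have : (⇑g - ⇑h) = ((g : Ω → X) - (h : Ω → X)) := rfl
        exact hD)
      refine le_trans this ?_
      rw [ENNReal.toReal_add (ENNReal.mul_ne_top ofReal_ne_top
          (ENNReal.rpow_ne_top_of_nonneg (by positivity) (measure_ne_top μ _))) ofReal_ne_top,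
        ENNReal.toReal_mul, ENNReal.toReal_ofReal hε.le, ← hM_def]
    refine lt_of_le_of_lt hdist ?_
    have : ε * M + ε = ε₀ * ((M+1)/(M+2)) := by
      rw [hε_def]; field_simp
    rw [this]
    have hlt1 : (M+1)/(M+2) < 1 := by
      rw [div_lt_one (by linarith)]; linarith
    calc ε₀ * ((M+1)/(M+2)) < ε₀ * 1 := by
          exact mul_lt_mul_of_pos_left hlt1 hε₀
      _ = ε₀ := mul_one _
  have hseq : IsSeqCompact (closure V) := by
    intro v hv
    have hch : ∀ n : ℕ, ∃ f ∈ V, dist (v n) f < 1/(n+1) := fun n =>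
      Metric.mem_closure_iff.1 (hv n) _ (by positivity)
    choose u huV hud using hch
    obtain ⟨φ, hφ, hcau⟩ := main u huV
    obtain ⟨x, hx⟩ := cauchySeq_tendsto_of_complete hcau
    refine ⟨x, ?_, φ, hφ, ?_⟩
    · exact mem_closure_of_tendsto hx (Eventually.of_forall fun n => huV (φ n))
    · refine hx.congr_dist ?_
      have hb : ∀ n : ℕ, dist ((u ∘ φ) n) ((v ∘ φ) n) ≤ 1 / (n + 1) := by
        intro n
        rw [dist_comm]
        refine le_trans (hud (φ n)).le ?_
        have hle : n ≤ φ n := hφ.le_apply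
        have h1 : (0:ℝ) < n + 1 := by positivity
        have h2 : (n:ℝ) + 1 ≤ (φ n : ℝ) + 1 := by
          have := (Nat.cast_le (α := ℝ)).2 hle; linarith
        exact one_div_le_one_div_of_le h1 h2
      exact squeeze_zero (fun n => dist_nonneg) hb tendsto_one_div_add_atTop_nhds_zero_nat
  exact hseq.isCompact
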